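/- With the weighted-graph and unit potential flow setup below, let θ, φ ∈ (0, π), define S_s(φ) = I − (1 − e^{−iφ})|φ_s⟩⟨φ_s|, S_f(θ) = I − (1 − e^{iθ})|f⟩⟨f|, and the operator U(θ,φ) = S_s(φ)( I − (1 − e^{iθ})(I − Π₊) ) on the edge space. Let ψ = α|φ_s⟩ + β|f⟩ for α, β ∈ ℂ, and let w = α·(1/(R_s √d_s)) Σ_{x ∈ V, x ≠ s} v_x √(d_x) |φ_x⟩. Then U(θ,φ)(ψ + w) = S_s(φ) S_f(θ) ψ + w; in particular, for unit ψ the transduction complexity of this rotation is at most |α|²(ET_s/(R_s d_s) − 1), where ET_s := (1/R_s) Σ_{x∈V} v_x² d_x. -/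

import Mathlib

open scoped InnerProductSpace BigOperators

namespace Elfs

variable {V : Type*} [Fintype V] [DecidableEq V]

/-- The degree of a vertex: `d_x = Σ_y w_{xy}`. -/
noncomputable def deg (w : V → V → ℝ) (x : V) : ℝ := ∑ y, w x y

/-- The basis state `|xy⟩` of the edge space. -/
noncomputable def ket (p : V × V) : EuclideanSpace ℂ (V × V) :=
  EuclideanSpace.single p 1

/-- The star state `|φ_x⟩ = (1/√d_x) Σ_y √(w_{xy}) |xy⟩`. -/
noncomputable def starState (w : V → V → ℝ) (x : V) : EuclideanSpace ℂ (V × V) :=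
  ((Real.sqrt (deg w x) : ℂ))⁻¹ • ∑ y, ((Real.sqrt (w x y) : ℝ) : ℂ) • ket (x, y)

/-- The electric flow state `|f⟩ = (1/√(2 R_s)) Σ_{(x,y)} (f_{xy}/√(w_{xy})) |xy⟩`
for the potential flow `f_{xy} = w_{xy}(v_x − v_y)` (terms with `w_{xy} = 0` contribute `0`,
matching the restriction of the sum to edges of positive weight). -/
noncomputable def flowState (w : V → V → ℝ) (v : V → ℝ) (s : V) :
    EuclideanSpace ℂ (V × V) :=
  ((Real.sqrt (2 * v s) : ℂ))⁻¹ •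
    ∑ p : V × V, ((w p.1 p.2 * (v p.1 - v p.2) / Real.sqrt (w p.1 p.2) : ℝ) : ℂ) • ket p

/-- The symmetric subspace `span{|xy⟩ + |yx⟩ : (x,y) ∈ E}`. -/
noncomputable def symSpan (E : Set (V × V)) : Submodule ℂ (EuclideanSpace ℂ (V × V)) :=
  Submodule.span ℂ {u | ∃ p ∈ E, u = ket p + ket p.swap}

/-- `Π₊`, the orthogonal projection onto the symmetric subspace. -/
noncomputable def projSym (E : Set (V × V)) :
    EuclideanSpace ℂ (V × V) →ₗ[ℂ] EuclideanSpace ℂ (V × V) :=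
  (symSpan E).subtype ∘ₗ (Submodule.orthogonalProjectionOnto (symSpan E)).toLinearMap

end Elfs

namespace Elfs

variable {V : Type*} [Fintype V] [DecidableEq V]

/-- The catalyst `(1/(R_s √d_s)) Σ_{x ≠ s} v_x √(d_x) |φ_x⟩`. -/
noncomputable def catalyst (w : V → V → ℝ) (v : V → ℝ) (s : V) :
    EuclideanSpace ℂ (V × V) :=
  (((v s * Real.sqrt (deg w s) : ℝ) : ℂ))⁻¹ •
    ∑ x ∈ Finset.univ \ {s}, (((v x * Real.sqrt (deg w x) : ℝ)) : ℂ) • starState w x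

/-- The outer product `|u⟩⟨u|` as a linear endomorphism. -/
noncomputable def outer {H : Type*} [NormedAddCommGroup H] [InnerProductSpace ℂ H]
    (u : H) : H →ₗ[ℂ] H :=
  LinearMap.smulRight ((innerSL ℂ u).toLinearMap) u

end Elfs

open Elfs

namespace Elfs

variable {V : Type*} [Fintype V] [DecidableEq V]

set_option linter.unusedSectionVars false

lemma sum_apply' {ι : Type*} (t : Finset ι) (f : ι → EuclideanSpace ℂ (V × V)) (q : V × V) :
    (∑ y ∈ t, f y) q = ∑ y ∈ t, f y q := by
  induction t using Finset.cons_induction with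
  | empty => rfl
  | cons a t ha ih => rw [Finset.sum_cons, Finset.sum_cons, ← ih]; rfl

lemma ket_apply (p q : V × V) : ket p q = if q = p then 1 else 0 := by
  simp [ket, EuclideanSpace.single_apply]

lemma star_apply (w : V → V → ℝ) (x : V) (q : V × V) :
    starState w x q
      = if q.1 = x then ((Real.sqrt (deg w x))⁻¹ * Real.sqrt (w x q.2) : ℝ) else 0 := by
  obtain ⟨a, b⟩ := q
  simp only [starState, PiLp.smul_apply, sum_apply', ket_apply, smul_eq_mul, mul_ite,
    mul_one, mul_zero, Prod.mk.injEq]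
  by_cases h : a = x
  · subst h
    rw [Finset.sum_eq_single b]
    · simp
    · intro y _ hy; simp [hy.symm]
    · simp
  · rw [Finset.sum_eq_zero] <;> simp [h, Ne.symm h]

lemma flow_apply (w : V → V → ℝ) (v : V → ℝ) (s : V) (q : V × V) :
    flowState w v s q
      = (((Real.sqrt (2 * v s))⁻¹
          * (w q.1 q.2 * (v q.1 - v q.2) / Real.sqrt (w q.1 q.2)) : ℝ) : ℂ) := by
  simp only [flowState, PiLp.smul_apply, sum_apply', ket_apply, smul_eq_mul, mul_ite,
    mul_one, mul_zero]
  rw [Finset.sum_eq_single q]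
  · simp
  · intro p _ hp; simp [Ne.symm hp]
  · simp

lemma catalyst_apply (w : V → V → ℝ) (v : V → ℝ) (s : V) (hdeg : ∀ x, 0 < deg w x)
    (q : V × V) :
    catalyst w v s q
      = if q.1 = s then 0
        else (((v s * Real.sqrt (deg w s))⁻¹ * (v q.1 * Real.sqrt (w q.1 q.2)) : ℝ) : ℂ) := by
  have hds : ∀ x, Real.sqrt (deg w x) ≠ 0 := fun x =>
    Real.sqrt_ne_zero'.mpr (hdeg x)
  simp only [catalyst, PiLp.smul_apply, sum_apply', star_apply, smul_eq_mul]
  by_cases h : q.1 = s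
  · rw [Finset.sum_eq_zero]
    · simp [h]
    · intro x hx
      simp only [Finset.mem_sdiff, Finset.mem_singleton, Finset.mem_univ, true_and] at hx
      have : ¬ (q.1 = x) := by rw [h]; exact fun hh => hx hh.symm
      simp [this]
  · rw [Finset.sum_eq_single q.1]
    · rw [if_pos rfl, if_neg h]
      have hc : ((Real.sqrt (deg w q.1) : ℝ) : ℂ) ≠ 0 := by exact_mod_cast hds q.1
      push_cast
      linear_combination (((v q.1 : ℂ)) * (Real.sqrt (w q.1 q.2) : ℂ) * ((v s : ℂ))⁻¹
        * ((Real.sqrt (deg w s) : ℂ))⁻¹) * mul_inv_cancel₀ hc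
    · intro x _ hx; simp [Ne.symm hx]
    · intro hq
      simp only [Finset.mem_sdiff, Finset.mem_singleton, Finset.mem_univ, true_and,
        not_not] at hq
      exact absurd hq h

lemma mem_symSpan (E : Set (V × V)) (u : EuclideanSpace ℂ (V × V))
    (hsym : ∀ q : V × V, u q.swap = u q) (hsupp : ∀ q ∉ E, u q = 0) :
    u ∈ symSpan E := by
  have hrep : u = (2 : ℂ)⁻¹ • ∑ p : V × V, u p • (ket p + ket p.swap) := by
    refine PiLp.ext fun q => ?_
    simp only [PiLp.smul_apply, sum_apply', PiLp.add_apply, ket_apply, smul_eq_mul]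
    have h1 : ∑ p : V × V, u p * ((if q = p then (1:ℂ) else 0) + (if q = p.swap then 1 else 0))
        = (∑ p : V × V, u p * (if q = p then (1:ℂ) else 0))
          + ∑ p : V × V, u p * (if q = p.swap then (1:ℂ) else 0) := by
      rw [← Finset.sum_add_distrib]; exact Finset.sum_congr rfl fun p _ => by ring
    rw [h1, Finset.sum_eq_single q, Finset.sum_eq_single q.swap]
    · have h2 : q = q.swap.swap := by simp
      have h3 : u q.swap = u q := hsym q
      simp only [← h2, if_pos rfl, mul_one, h3]
      simp only [if_true, mul_one]
      ring
    · intro p _ hp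
      have : ¬ q = p.swap := fun hh => hp (by simp [hh])
      simp [this]
    · simp
    · intro p _ hp; simp [Ne.symm hp]
    · simp
  rw [hrep]
  refine Submodule.smul_mem _ _ (Submodule.sum_mem _ fun p _ => ?_)
  by_cases hp : u p = 0
  · simp [hp]
  · refine Submodule.smul_mem _ _ (Submodule.subset_span ?_)
    refine ⟨p, ?_, rfl⟩
    by_contra hE
    exact hp (hsupp p hE)

lemma mem_symSpan_orth (E : Set (V × V)) (u : EuclideanSpace ℂ (V × V))
    (hanti : ∀ q : V × V, u q.swap = - u q) :
    u ∈ (symSpan E)ᗮ := by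
  rw [Submodule.mem_orthogonal]
  intro x hx
  induction hx using Submodule.span_induction with
  | mem x hxx =>
    obtain ⟨p, hp, rfl⟩ := hxx
    have h1 : ∀ p : V × V, ⟪ket p, u⟫_ℂ = u p := by
      intro p
      simp [ket, EuclideanSpace.inner_single_left]
    rw [inner_add_left, h1, h1, hanti p]
    ring
  | zero => simp
  | add x y _ _ hx hy => rw [inner_add_left, hx, hy]; ring
  | smul c x _ hx => rw [inner_smul_left, hx]; ring

lemma projSym_eq (E : Set (V × V)) (u a b : EuclideanSpace ℂ (V × V))
    (hu : u = a + b)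
    (hasym : ∀ q : V × V, a q.swap = a q) (hasupp : ∀ q ∉ E, a q = 0)
    (hbanti : ∀ q : V × V, b q.swap = - b q) :
    projSym E u = a := by
  have := Submodule.eq_starProjection_of_mem_orthogonal' (K := symSpan E)
    (mem_symSpan E a hasym hasupp) (mem_symSpan_orth E b hbanti) hu
  rw [← this]; rfl

lemma div_sqrt_eq (a t : ℝ) (ha : 0 ≤ a) : a * t / Real.sqrt a = Real.sqrt a * t := by
  rcases eq_or_lt_of_le ha with h | h
  · simp [← h]
  · have hs : Real.sqrt a ≠ 0 := ne_of_gt (Real.sqrt_pos.mpr h)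
    rw [div_eq_iff hs]
    linear_combination (-t) * Real.mul_self_sqrt ha

lemma energy {V : Type*} [Fintype V] [DecidableEq V]
    (w : V → V → ℝ) (v : V → ℝ) (s : V) (M : Finset V)
    (hwsymm : ∀ x y, w x y = w y x) (hsM : s ∉ M)
    (hvM : ∀ y ∈ M, v y = 0)
    (hunit : ∑ y, w s y * (v s - v y) = 1)
    (hcons : ∀ x, x ≠ s → x ∉ M → ∑ y, w x y * (v x - v y) = 0) :
    ∑ x, ∑ y, w x y * (v x - v y) ^ 2 = 2 * v s := by
  have hT : ∑ x, v x * ∑ y, w x y * (v x - v y) = v s := by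
    rw [Finset.sum_eq_single s]
    · rw [hunit]; ring
    · intro x _ hx
      by_cases hxM : x ∈ M
      · rw [hvM x hxM]; ring
      · rw [hcons x hx hxM]; ring
    · simp
  have hsplit : ∀ x y, w x y * (v x - v y) ^ 2
      = w x y * (v x - v y) * v x + w y x * (v y - v x) * v y := by
    intro x y; rw [hwsymm x y]; ring
  calc ∑ x, ∑ y, w x y * (v x - v y) ^ 2
      = (∑ x, ∑ y, w x y * (v x - v y) * v x)
        + ∑ x, ∑ y, w y x * (v y - v x) * v y := by
        rw [← Finset.sum_add_distrib]
        refine Finset.sum_congr rfl fun x _ => ?_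
        rw [← Finset.sum_add_distrib]
        exact Finset.sum_congr rfl fun y _ => hsplit x y
    _ = (∑ x, v x * ∑ y, w x y * (v x - v y))
        + ∑ x, v x * ∑ y, w x y * (v x - v y) := by
        congr 1
        · refine Finset.sum_congr rfl fun x _ => ?_
          rw [Finset.mul_sum]
          exact Finset.sum_congr rfl fun y _ => by ring
        · rw [Finset.sum_comm]
          refine Finset.sum_congr rfl fun x _ => ?_
          rw [Finset.mul_sum]
          exact Finset.sum_congr rfl fun y _ => by ring
    _ = 2 * v s := by rw [hT]; ring
end Elfs

lemma Gc_sym (R ds t va vb a : ℝ) (hR : R ≠ 0) (hds : ds ≠ 0)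
    (ha : a * a = 2 * R) (ha0 : a ≠ 0) :
    (R * ds)⁻¹ * (va * t) - (a * ds)⁻¹ * (a⁻¹ * (t * (va - vb)))
      = t * (va + vb) / (2 * R * ds) := by
  have h2R : (2 : ℝ) * R ≠ 0 := by simp [hR]
  field_simp
  first
  | linear_combination (t * ds ^ 2 * R * (va - vb)) * ha
  | linear_combination (-(t * ds ^ 2 * R * (va - vb))) * ha
  | linear_combination (2 * t * ds ^ 2 * R * (va - vb)) * ha
  | linear_combination (t * (va - vb)) * ha

/-- Elfs rotation: `U(θ,φ) = S_s(φ)(I − (1 − e^{iθ})(I − Π₊))` transduces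
`ψ = α|φ_s⟩ + β|f⟩` into `S_s(φ) S_f(θ) ψ` with catalyst `α·w` of squared norm at most
`|α|²(ET_s/(R_s d_s) − 1)` when `ψ` is a unit vector. -/
theorem stmt9 {V : Type*} [Fintype V] [DecidableEq V]
    (E : Set (V × V)) (w : V → V → ℝ) (s : V) (M : Finset V)
    (hE : ∀ p : V × V, p ∈ E ↔ p.swap ∈ E)
    (hw0 : ∀ x y, 0 ≤ w x y) (hwsymm : ∀ x y, w x y = w y x)
    (hwE : ∀ x y, (x, y) ∉ E → w x y = 0)
    (hdeg : ∀ x, 0 < deg w x)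
    (hM : M.Nonempty) (hsM : s ∉ M)
    (v : V → ℝ) (hvM : ∀ y ∈ M, v y = 0) (hRpos : 0 < v s)
    (hunit : ∑ y, w s y * (v s - v y) = 1)
    (hcons : ∀ x, x ≠ s → x ∉ M → ∑ y, w x y * (v x - v y) = 0)
    (θ φ' : ℝ) (hθ0 : 0 < θ) (hθπ : θ < Real.pi) (hφ0 : 0 < φ') (hφπ : φ' < Real.pi)
    (Ss Sf Uop : EuclideanSpace ℂ (V × V) →ₗ[ℂ] EuclideanSpace ℂ (V × V))
    (hSs : Ss = LinearMap.id -
        (1 - Complex.exp (-(φ' : ℂ) * Complex.I)) • outer (starState w s))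
    (hSf : Sf = LinearMap.id -
        (1 - Complex.exp ((θ : ℂ) * Complex.I)) • outer (flowState w v s))
    (hUop : Uop = Ss ∘ₗ (LinearMap.id -
        (1 - Complex.exp ((θ : ℂ) * Complex.I)) • (LinearMap.id - projSym E)))
    (α β : ℂ) (ψ wc : EuclideanSpace ℂ (V × V))
    (hψ : ψ = α • starState w s + β • flowState w v s)
    (hwc : wc = α • catalyst w v s) :
    Uop (ψ + wc) = (Ss ∘ₗ Sf) ψ + wc ∧
    (‖ψ‖ = 1 → ‖wc‖ ^ 2 ≤
      ‖α‖ ^ 2 * (((v s)⁻¹ * ∑ x, v x ^ 2 * deg w x) / (v s * deg w s) - 1)) := by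
  have hds : (0:ℝ) < deg w s := hdeg s
  have hvs : v s ≠ 0 := ne_of_gt hRpos
  have hsqds : Real.sqrt (deg w s) ≠ 0 := ne_of_gt (Real.sqrt_pos.mpr hds)
  have h2R : (0:ℝ) < 2 * v s := by linarith
  have hsq2R : Real.sqrt (2 * v s) ≠ 0 := ne_of_gt (Real.sqrt_pos.mpr h2R)
  have hss2R : Real.sqrt (2 * v s) * Real.sqrt (2 * v s) = 2 * v s :=
    Real.mul_self_sqrt h2R.le
  set F := flowState w v s with hFdef
  set S := starState w s with hSdef
  set C := catalyst w v s with hCdef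
  set c0 : ℝ := (Real.sqrt (2 * v s) * Real.sqrt (deg w s))⁻¹ with hc0
  set Fc : V × V → ℝ := fun q =>
    (Real.sqrt (2 * v s))⁻¹ * (w q.1 q.2 * (v q.1 - v q.2) / Real.sqrt (w q.1 q.2)) with hFc
  have hFapp : ∀ q, F q = ((Fc q : ℝ) : ℂ) := fun q => flow_apply w v s q
  have hSapp : ∀ q : V × V, S q
      = if q.1 = s then ((Real.sqrt (deg w s))⁻¹ * Real.sqrt (w s q.2) : ℝ) else 0 :=
    star_apply w s
  have hCapp : ∀ q : V × V, C q
      = if q.1 = s then 0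
        else (((v s * Real.sqrt (deg w s))⁻¹ * (v q.1 * Real.sqrt (w q.1 q.2)) : ℝ) : ℂ) :=
    catalyst_apply w v s hdeg
  -- inner products
  have hFS : ⟪F, S⟫_ℂ = (c0 : ℂ) := by
    have hterm : ∀ y, Fc (s, y) * ((Real.sqrt (deg w s))⁻¹ * Real.sqrt (w s y))
        = (Real.sqrt (2 * v s))⁻¹ * (Real.sqrt (deg w s))⁻¹ * (w s y * (v s - v y)) := by
      intro y
      simp only [hFc]
      rw [div_sqrt_eq _ _ (hw0 s y)]
      linear_combination ((Real.sqrt (2 * v s))⁻¹ * (Real.sqrt (deg w s))⁻¹ * (v s - v y))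
        * Real.mul_self_sqrt (hw0 s y)
    have hreal : ∑ y, Fc (s, y) * ((Real.sqrt (deg w s))⁻¹ * Real.sqrt (w s y)) = c0 := by
      calc ∑ y, Fc (s, y) * ((Real.sqrt (deg w s))⁻¹ * Real.sqrt (w s y))
          = ∑ y, (Real.sqrt (2 * v s))⁻¹ * (Real.sqrt (deg w s))⁻¹ * (w s y * (v s - v y)) :=
            Finset.sum_congr rfl fun y _ => hterm y
        _ = (Real.sqrt (2 * v s))⁻¹ * (Real.sqrt (deg w s))⁻¹
            * ∑ y, w s y * (v s - v y) := by rw [Finset.mul_sum]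
        _ = c0 := by rw [hunit, hc0, mul_inv]; ring
    rw [PiLp.inner_apply]
    simp only [RCLike.inner_apply, hFapp, Complex.conj_ofReal, hSapp]
    rw [Fintype.sum_prod_type]
    rw [Finset.sum_eq_single s]
    · norm_cast
      simpa [mul_comm] using hreal
    · intro x _ hx
      refine Finset.sum_eq_zero fun y _ => ?_
      simp [hx]
    · simp
  have hFF : ⟪F, F⟫_ℂ = 1 := by
    have hterm : ∀ p : V × V, Fc p * Fc p
        = (2 * v s)⁻¹ * (w p.1 p.2 * (v p.1 - v p.2) ^ 2) := by
      intro p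
      simp only [hFc]
      rw [div_sqrt_eq _ _ (hw0 p.1 p.2)]
      have h2 : (Real.sqrt (2 * v s))⁻¹ * (Real.sqrt (2 * v s))⁻¹ = (2 * v s)⁻¹ := by
        rw [← mul_inv, hss2R]
      linear_combination (Real.sqrt (w p.1 p.2) * Real.sqrt (w p.1 p.2)
          * (v p.1 - v p.2) ^ 2) * h2
        + ((2 * v s)⁻¹ * (v p.1 - v p.2) ^ 2) * Real.mul_self_sqrt (hw0 p.1 p.2)
    have hreal : ∑ p : V × V, Fc p * Fc p = 1 := by
      calc ∑ p : V × V, Fc p * Fc p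
          = ∑ p : V × V, (2 * v s)⁻¹ * (w p.1 p.2 * (v p.1 - v p.2) ^ 2) :=
            Finset.sum_congr rfl fun p _ => hterm p
        _ = (2 * v s)⁻¹ * ∑ x, ∑ y, w x y * (v x - v y) ^ 2 := by
            rw [Fintype.sum_prod_type, Finset.mul_sum]
            exact Finset.sum_congr rfl fun x _ => by rw [Finset.mul_sum]
        _ = 1 := by
            rw [energy w v s M hwsymm hsM hvM hunit hcons]
            field_simp
    rw [PiLp.inner_apply]
    simp only [RCLike.inner_apply, hFapp, Complex.conj_ofReal]
    exact_mod_cast congrArg Complex.ofReal hreal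
  have hSC : ⟪S, C⟫_ℂ = 0 := by
    rw [PiLp.inner_apply]
    refine Finset.sum_eq_zero fun p _ => ?_
    rw [hSapp, hCapp]
    by_cases h : p.1 = s
    · simp [h]
    · simp [h]
  -- the symmetric part
  set Gc : V × V → ℝ := fun q =>
    (v s * Real.sqrt (deg w s))⁻¹ * (v q.1 * Real.sqrt (w q.1 q.2)) - c0 * Fc q with hGcdef
  have hGc : ∀ q : V × V, Gc q
      = Real.sqrt (w q.1 q.2) * (v q.1 + v q.2) / (2 * v s * Real.sqrt (deg w s)) := by
    intro q
    rcases eq_or_lt_of_le (hw0 q.1 q.2) with h | h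
    · simp [hGcdef, hFc, ← h]
    · simp only [hGcdef, hFc, hc0]
      rw [div_sqrt_eq _ _ (hw0 q.1 q.2)]
      linear_combination Gc_sym (v s) (Real.sqrt (deg w s)) (Real.sqrt (w q.1 q.2))
        (v q.1) (v q.2) (Real.sqrt (2 * v s)) hvs hsqds hss2R hsq2R
  have hSCsum : ∀ q : V × V, S q + C q
      = (((v s * Real.sqrt (deg w s))⁻¹ * (v q.1 * Real.sqrt (w q.1 q.2)) : ℝ) : ℂ) := by
    intro q
    rw [hSapp, hCapp]
    by_cases h : q.1 = s
    · rw [if_pos h, if_pos h, add_zero, h]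
      have hr : (Real.sqrt (deg w s))⁻¹ * Real.sqrt (w s q.2)
          = (v s * Real.sqrt (deg w s))⁻¹ * (v s * Real.sqrt (w s q.2)) := by
        rw [mul_inv]
        field_simp
      exact congrArg Complex.ofReal hr
    · rw [if_neg h, if_neg h]
      push_cast
      rw [zero_add]
  have hacoord : ∀ q : V × V,
      (ψ + wc - (α * (c0 : ℂ) + β) • F) q = α * ((Gc q : ℝ) : ℂ) := by
    intro q
    rw [hψ, hwc]
    simp only [PiLp.sub_apply, PiLp.add_apply, PiLp.smul_apply, smul_eq_mul]
    have h2 : ((Gc q : ℝ) : ℂ)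
        = (((v s * Real.sqrt (deg w s))⁻¹ * (v q.1 * Real.sqrt (w q.1 q.2)) : ℝ) : ℂ)
          - ((c0 : ℝ) : ℂ) * ((Fc q : ℝ) : ℂ) := by
      rw [hGcdef]; push_cast; ring
    rw [hFapp, h2, ← hSCsum q]
    ring
  have hproj : projSym E (ψ + wc) = (ψ + wc) - (α * (c0 : ℂ) + β) • F := by
    apply projSym_eq E _ _ ((α * (c0 : ℂ) + β) • F) (by abel)
    · intro q
      rw [hacoord, hacoord]
      congr 1
      norm_cast
      rw [hGc, hGc]
      simp only [Prod.fst_swap, Prod.snd_swap]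
      rw [hwsymm q.2 q.1]
      ring
    · intro q hq
      rw [hacoord]
      have hw' : w q.1 q.2 = 0 := hwE q.1 q.2 (by simpa using hq)
      rw [hGc]
      simp [hw']
    · intro q
      rw [PiLp.smul_apply, PiLp.smul_apply, hFapp, hFapp]
      have hFanti : Fc q.swap = - Fc q := by
        simp only [hFc, Prod.fst_swap, Prod.snd_swap]
        rw [hwsymm q.2 q.1]
        ring
      rw [hFanti]
      push_cast
      rw [smul_neg]
  have hSswc : Ss wc = wc := by
    rw [hSs, hwc]
    simp only [LinearMap.sub_apply, LinearMap.id_apply, LinearMap.smul_apply]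
    simp [outer, LinearMap.smulRight_apply, inner_smul_right, hSC]
  have houter : outer F ψ = (α * (c0 : ℂ) + β) • F := by
    have hFψ : ⟪F, ψ⟫_ℂ = α * (c0 : ℂ) + β := by
      rw [hψ, inner_add_right, inner_smul_right, inner_smul_right, hFS, hFF]
      ring
    simp only [outer, LinearMap.smulRight_apply, ContinuousLinearMap.coe_coe,
      innerSL_apply_apply, hFψ]
  constructor
  · rw [hUop, LinearMap.comp_apply, LinearMap.comp_apply]
    simp only [LinearMap.sub_apply, LinearMap.id_apply, LinearMap.smul_apply]
    rw [hproj, sub_sub_cancel, hSf]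
    simp only [LinearMap.sub_apply, LinearMap.id_apply, LinearMap.smul_apply]
    rw [houter]
    have hrearr : (ψ + wc) - (1 - Complex.exp ((θ : ℂ) * Complex.I))
          • ((α * (c0 : ℂ) + β) • F)
        = (ψ - (1 - Complex.exp ((θ : ℂ) * Complex.I)) • ((α * (c0 : ℂ) + β) • F)) + wc := by
      abel
    rw [hrearr, map_add, hSswc]
  · intro _
    have hdsne : deg w s ≠ 0 := ne_of_gt hds
    have hCnorm : ‖C‖ ^ 2
        = (∑ x ∈ Finset.univ \ {s}, v x ^ 2 * deg w x) / (v s ^ 2 * deg w s) := by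
      rw [EuclideanSpace.norm_eq, Real.sq_sqrt (by positivity)]
      calc ∑ q : V × V, ‖C q‖ ^ 2
          = ∑ q : V × V, (if q.1 = s then 0
              else ((v s * Real.sqrt (deg w s))⁻¹ * (v q.1 * Real.sqrt (w q.1 q.2))) ^ 2) := by
            refine Finset.sum_congr rfl fun q _ => ?_
            rw [hCapp]
            by_cases h : q.1 = s
            · simp [h]
            · rw [if_neg h, if_neg h, Complex.norm_real, Real.norm_eq_abs, sq_abs]
        _ = ∑ x, ∑ y, (if x = s then 0
              else ((v s * Real.sqrt (deg w s))⁻¹ * (v x * Real.sqrt (w x y))) ^ 2) := by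
            rw [Fintype.sum_prod_type]
        _ = ∑ x ∈ Finset.univ \ {s},
              ∑ y, ((v s * Real.sqrt (deg w s))⁻¹ * (v x * Real.sqrt (w x y))) ^ 2 := by
            rw [Finset.sum_eq_sum_sdiff_singleton_add (Finset.mem_univ s)]
            have hz : (∑ y, if s = s then (0:ℝ)
                else ((v s * Real.sqrt (deg w s))⁻¹ * (v s * Real.sqrt (w s y))) ^ 2) = 0 :=
              Finset.sum_eq_zero fun y _ => if_pos rfl
            rw [hz, add_zero]
            refine Finset.sum_congr rfl fun x hx => ?_
            have hxs : x ≠ s := by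
              simp only [Finset.mem_sdiff, Finset.mem_singleton] at hx
              exact hx.2
            exact Finset.sum_congr rfl fun y _ => by rw [if_neg hxs]
        _ = (∑ x ∈ Finset.univ \ {s}, v x ^ 2 * deg w x) / (v s ^ 2 * deg w s) := by
            rw [Finset.sum_div]
            refine Finset.sum_congr rfl fun x _ => ?_
            have hx1 : ∀ y, ((v s * Real.sqrt (deg w s))⁻¹ * (v x * Real.sqrt (w x y))) ^ 2
                = (v x ^ 2 / (v s ^ 2 * deg w s)) * w x y := by
              intro y
              rw [mul_pow, inv_pow, mul_pow, mul_pow,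
                Real.sq_sqrt (hw0 x y), Real.sq_sqrt hds.le]
              field_simp
            rw [Finset.sum_congr rfl fun y _ => hx1 y, ← Finset.mul_sum]
            rw [show (∑ y, w x y) = deg w x from rfl]
            ring
    have hsplit : ∑ x, v x ^ 2 * deg w x
        = (∑ x ∈ Finset.univ \ {s}, v x ^ 2 * deg w x) + v s ^ 2 * deg w s :=
      Finset.sum_eq_sum_sdiff_singleton_add (Finset.mem_univ s) _
    have hrhs : ((v s)⁻¹ * ∑ x, v x ^ 2 * deg w x) / (v s * deg w s) - 1
        = (∑ x ∈ Finset.univ \ {s}, v x ^ 2 * deg w x) / (v s ^ 2 * deg w s) := by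
      rw [hsplit]
      field_simp
      ring
    rw [hwc, norm_smul, mul_pow, hrhs, ← hCnorm]
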